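/- Let H be a Hilbert space written as an orthogonal direct sum of infinitely many closed infinite-dimensional subspaces H = ⊕ₙ Xₙ, and let (Wₙ) be an increasing exhaustive sequence of subsets of the unitary group U(H). Then there exists n such that for every unitary T with T[Xₙ] = Xₙ, there is S ∈ Wₙ with S restricted to Xₙ equal to T restricted to Xₙ. -/

import Mathlib

open Pointwise
open scoped InnerProductSpace

theorem exists_restriction_in_Wn
    (H : Type*) [NormedAddCommGroup H] [InnerProductSpace ℂ H] [CompleteSpace H]
    [TopologicalSpace.SeparableSpace H]
    (X : ℕ → Submodule ℂ H)
    (hclosed : ∀ n, IsClosed (X n : Set H))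
    (hinf : ∀ n, ¬ FiniteDimensional ℂ (X n))
    (horth : ∀ m n, m ≠ n → ∀ x ∈ X m, ∀ y ∈ X n, ⟪x, y⟫_ℂ = 0)
    (hsum : (⨆ n, X n).topologicalClosure = ⊤)
    (W : ℕ → Set (unitary (H →L[ℂ] H)))
    (hmono : Monotone W)
    (hexh : (⋃ n, W n) = Set.univ) :
    ∃ n : ℕ, ∀ T : unitary (H →L[ℂ] H),
      (X n).map ((T : H →L[ℂ] H) : H →ₗ[ℂ] H) = X n →
      ∃ S ∈ W n, ∀ x ∈ X n, (S : H →L[ℂ] H) x = (T : H →L[ℂ] H) x := by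
  by_contra h
  push_neg at h
  choose T hT hbad using h
  haveI : ∀ n, CompleteSpace (X n) := fun n => (hclosed n).completeSpace_coe
  -- the isometric images of X n under T n stay in X n
  have hmem : ∀ n (x : X n), (T n : H →L[ℂ] H) x ∈ X n := by
    intro n x
    have := Submodule.mem_map_of_mem (f := ((T n : H →L[ℂ] H) : H →ₗ[ℂ] H)) x.2
    rwa [hT n] at this
  -- the first Hilbert sum: inclusions
  have hfam : OrthogonalFamily ℂ (fun n => X n) (fun n => (X n).subtypeₗᵢ) := by
    intro m n hmn x y
    exact horth m n hmn x x.2 y y.2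
  have hS1 : IsHilbertSum ℂ (fun n => X n) (fun n => (X n).subtypeₗᵢ) :=
    IsHilbertSum.mkInternal X hfam (by rw [hsum])
  -- the second family: x ↦ T n x
  let V : ∀ n, X n →ₗᵢ[ℂ] H := fun n =>
    (Unitary.linearIsometryEquiv (T n)).toLinearIsometry.comp (X n).subtypeₗᵢ
  have hVapp : ∀ n (x : X n), V n x = (T n : H →L[ℂ] H) x := fun n x => rfl
  have hfam' : OrthogonalFamily ℂ (fun n => X n) V := by
    intro m n hmn x y
    rw [hVapp, hVapp]
    exact horth m n hmn _ (hmem m x) _ (hmem n y)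
  have hrange : ∀ n, LinearMap.range (V n).toLinearMap = X n := by
    intro n
    apply le_antisymm
    · rintro _ ⟨x, rfl⟩
      exact hmem n x
    · intro y hy
      rw [← hT n] at hy
      obtain ⟨x, hx, rfl⟩ := hy
      exact ⟨⟨x, hx⟩, rfl⟩
  have hS2 : IsHilbertSum ℂ (fun n => X n) V := by
    refine IsHilbertSum.mk hfam' ?_
    have : (⨆ n, LinearMap.range (V n).toLinearMap) = ⨆ n, X n := by
      simp_rw [hrange]
    rw [this, hsum]
  -- glue: a global unitary agreeing with T n on X n
  let e1 := hS1.linearIsometryEquiv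
  let e2 := hS2.linearIsometryEquiv
  let U : H ≃ₗᵢ[ℂ] H := e1.trans e2.symm
  have hU : ∀ n, ∀ x ∈ X n, U x = (T n : H →L[ℂ] H) x := by
    intro n x hx
    have h1 : e1 x = lp.single 2 n (⟨x, hx⟩ : X n) := by
      have := hS1.linearIsometryEquiv_symm_apply_single (i := n) (⟨x, hx⟩ : X n)
      have : e1 (e1.symm (lp.single 2 n (⟨x, hx⟩ : X n))) = e1 ((X n).subtypeₗᵢ ⟨x, hx⟩) := by
        rw [this]
      simpa using this.symm
    show e2.symm (e1 x) = _
    rw [h1, hS2.linearIsometryEquiv_symm_apply_single]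
    rfl
  -- U as a unitary element
  let S : unitary (H →L[ℂ] H) := Unitary.linearIsometryEquiv.symm U
  have hSapp : ∀ x : H, (S : H →L[ℂ] H) x = U x := fun x => rfl
  have hSmem : S ∈ ⋃ n, W n := by rw [hexh]; trivial
  obtain ⟨m, hm⟩ := Set.mem_iUnion.mp hSmem
  obtain ⟨x, hx, hne⟩ := hbad m S hm
  exact hne (by rw [hSapp, hU m x hx])
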